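/- For every integer a₂, the cokernel of the 3×3 integer matrix A = [[−2, 2a₂, 0], [0, −2, 2a₂], [0, 2a₂, 1 − 2a₂²]], i.e. the quotient of ℤ³ by the ℤ-span of the columns of A, is isomorphic as an abelian group to (ℤ/2ℤ) × (ℤ/2ℤ); equivalently, the Smith normal form of A is diag(1, 2, 2). (Paper: Lemma 5.6, case (5) — the degree-4 relation matrix for the family (5) of Corollary 4.10, a non-positively-curved family whose singular sphere has stable orbifold cohomology ℤ₂².) -/

import Mathlib

private def fmap (a₂ : ℤ) : (Fin 3 → ℤ) →ₗ[ℤ] ZMod 2 × ZMod 2 where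
  toFun x := (((x 0 + a₂ * x 1 : ℤ) : ZMod 2), ((x 1 : ℤ) : ZMod 2))
  map_add' x y := by
    simp only [Pi.add_apply, Prod.mk_add_mk, Prod.mk.injEq]
    constructor <;> push_cast <;> ring
  map_smul' c x := by
    simp only [Pi.smul_apply, smul_eq_mul, RingHom.id_apply, Prod.smul_mk, zsmul_eq_mul,
      Prod.mk.injEq]
    constructor <;> push_cast <;> ring

/-- **Lemma 5.6, case (5).** For every integer `a₂`, the cokernel of the degree-4 relation
matrix `[[−2, 2a₂, 0], [0, −2, 2a₂], [0, 2a₂, 1 − 2a₂²]]` is isomorphic as an abelian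
group to `ℤ/2ℤ × ℤ/2ℤ`; equivalently, the Smith normal form of the matrix is
`diag(1, 2, 2)`. -/
theorem cokernel_case_five (a₂ : ℤ) :
    Nonempty
      (((Fin 3 → ℤ) ⧸ LinearMap.range (Matrix.mulVecLin
          !![-2, 2 * a₂, 0;
             0, -2, 2 * a₂;
             0, 2 * a₂, 1 - 2 * a₂ ^ 2])) ≃+
        (ZMod 2 × ZMod 2)) := by
  have hker : LinearMap.range (Matrix.mulVecLin
          !![-2, 2 * a₂, 0;
             0, -2, 2 * a₂;
             0, 2 * a₂, 1 - 2 * a₂ ^ 2]) = LinearMap.ker (fmap a₂) := by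
    apply le_antisymm
    · rintro x ⟨v, rfl⟩
      simp only [LinearMap.mem_ker, fmap, LinearMap.coe_mk, AddHom.coe_mk,
        Matrix.mulVecLin_apply, Matrix.mulVec, dotProduct, Prod.mk_eq_zero]
      have h2 : ((2 : ℤ) : ZMod 2) = 0 := by decide
      constructor <;> · push_cast; simp [Fin.sum_univ_three]; ring_nf;
                        simp [show (2:ZMod 2) = 0 by decide, show (4:ZMod 2) = 0 by decide]
    · intro x hx
      simp only [LinearMap.mem_ker, fmap, LinearMap.coe_mk, AddHom.coe_mk,
        Prod.mk_eq_zero] at hx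
      obtain ⟨h0, h1⟩ := hx
      rw [ZMod.intCast_zmod_eq_zero_iff_dvd] at h1
      obtain ⟨k1, hk1⟩ := h1
      have h0' : ((x 0 : ℤ) : ZMod 2) = 0 := by
        rw [hk1] at h0; push_cast at h0
        simpa [show (2:ZMod 2) = 0 by decide] using h0
      rw [ZMod.intCast_zmod_eq_zero_iff_dvd] at h0'
      obtain ⟨k0, hk0⟩ := h0'
      refine ⟨![-k0 + k1 * (2 * a₂ ^ 3 - a₂) + x 2 * a₂ ^ 2,
               k1 * (2 * a₂ ^ 2 - 1) + x 2 * a₂,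
               k1 * (2 * a₂) + x 2], ?_⟩
      funext i
      fin_cases i <;>
        simp [Matrix.mulVecLin_apply, Matrix.mulVec, dotProduct,
          Fin.sum_univ_three, hk0, hk1] <;> ring
  rw [hker]
  refine ⟨(LinearMap.quotKerEquivOfSurjective (fmap a₂) ?_).toAddEquiv⟩
  rintro ⟨u, v⟩
  refine ⟨![(u.val : ℤ) - a₂ * (v.val : ℤ), (v.val : ℤ), 0], ?_⟩
  simp only [fmap, LinearMap.coe_mk, AddHom.coe_mk, Matrix.cons_val_zero,
    Matrix.cons_val_one, Matrix.head_cons, Prod.mk.injEq]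
  constructor <;> push_cast <;> simp [ZMod.natCast_val, ZMod.cast_id]
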